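/- Let n ≥ 2, k ≥ 1, R ∈ (-1,1), and let ψ be differentiable on an open subinterval of (-1,1) satisfying ψ'(r) = -(1/(k(1-r²)))(ψ(r)²+1)(√(1-r²)ψ(r)² - (n-1)(r-R)ψ(r) + √(1-r²)). For r ∈ (-1,a] ∪ [b,1): (i) if η₁(r) < ψ(r) < η₂(r) then ψ'(r) > 0; (ii) if ψ(r) = η₁(r) or ψ(r) = η₂(r) then ψ'(r) = 0; (iii) if ψ(r) < η₁(r) or ψ(r) > η₂(r) then ψ'(r) < 0. -/

import Mathlib

noncomputable def Bq (n : ℕ) (R r : ℝ) : ℝ :=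
  (((n : ℝ) - 1) ^ 2 + 4) * r ^ 2 - 2 * ((n : ℝ) - 1) ^ 2 * R * r + ((n : ℝ) - 1) ^ 2 * R ^ 2 - 4

noncomputable def rootA (n : ℕ) (R : ℝ) : ℝ :=
  (((n : ℝ) - 1) ^ 2 * R - 2 * Real.sqrt (((n : ℝ) - 1) ^ 2 * (1 - R ^ 2) + 4)) / (((n : ℝ) - 1) ^ 2 + 4)

noncomputable def rootB (n : ℕ) (R : ℝ) : ℝ :=
  (((n : ℝ) - 1) ^ 2 * R + 2 * Real.sqrt (((n : ℝ) - 1) ^ 2 * (1 - R ^ 2) + 4)) / (((n : ℝ) - 1) ^ 2 + 4)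

noncomputable def Aq (n : ℕ) (R x r : ℝ) : ℝ :=
  Real.sqrt (1 - r ^ 2) * x ^ 2 - ((n : ℝ) - 1) * (r - R) * x + Real.sqrt (1 - r ^ 2)

noncomputable def eta1 (n : ℕ) (R r : ℝ) : ℝ :=
  (((n : ℝ) - 1) * (r - R) - Real.sqrt (Bq n R r)) / (2 * Real.sqrt (1 - r ^ 2))

noncomputable def eta2 (n : ℕ) (R r : ℝ) : ℝ :=
  (((n : ℝ) - 1) * (r - R) + Real.sqrt (Bq n R r)) / (2 * Real.sqrt (1 - r ^ 2))

noncomputable def Phi (n k : ℕ) (R r p : ℝ) : ℝ :=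
  -(1 / ((k : ℝ) * (1 - r ^ 2))) * (p ^ 2 + 1) *
    (Real.sqrt (1 - r ^ 2) * p ^ 2 - ((n : ℝ) - 1) * (r - R) * p + Real.sqrt (1 - r ^ 2))

theorem stmt_5 (n k : ℕ) (hn : 2 ≤ n) (hk : 1 ≤ k) (R : ℝ) (hR1 : -1 < R) (hR2 : R < 1)
    (x y : ℝ) (hx : -1 ≤ x) (hy : y ≤ 1) (ψ : ℝ → ℝ)
    (hode : ∀ r ∈ Set.Ioo x y, HasDerivAt ψ (Phi n k R r (ψ r)) r)
    (r : ℝ) (hr : r ∈ Set.Ioo x y)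
    (hmem : r ∈ Set.Ioc (-1 : ℝ) (rootA n R) ∪ Set.Ico (rootB n R) 1) :
    (eta1 n R r < ψ r ∧ ψ r < eta2 n R r → 0 < deriv ψ r) ∧
    (ψ r = eta1 n R r ∨ ψ r = eta2 n R r → deriv ψ r = 0) ∧
    (ψ r < eta1 n R r ∨ eta2 n R r < ψ r → deriv ψ r < 0) := by
  obtain ⟨hrx, hry⟩ := hr
  have hr1 : (-1 : ℝ) < r := lt_of_le_of_lt hx hrx
  have hr2 : r < 1 := lt_of_lt_of_le hry hy
  have h1r : (0:ℝ) < 1 - r ^ 2 := by nlinarith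
  have hs : 0 < Real.sqrt (1 - r ^ 2) := Real.sqrt_pos.mpr h1r
  have hs2 : Real.sqrt (1 - r ^ 2) ^ 2 = 1 - r ^ 2 := Real.sq_sqrt h1r.le
  have hC : (0:ℝ) < ((n:ℝ)-1)^2 + 4 := by positivity
  have hR2' : R ^ 2 < 1 := by nlinarith
  have hD : (0:ℝ) ≤ ((n:ℝ)-1)^2 * (1 - R^2) + 4 := by
    nlinarith [mul_nonneg (sq_nonneg ((n:ℝ)-1)) (by nlinarith : (0:ℝ) ≤ 1 - R^2)]
  have hD2 : (Real.sqrt (((n:ℝ)-1)^2 * (1-R^2) + 4))^2 = ((n:ℝ)-1)^2*(1-R^2)+4 :=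
    Real.sq_sqrt hD
  have hfactB : Bq n R r = (((n:ℝ)-1)^2+4) * (r - rootA n R) * (r - rootB n R) := by
    unfold Bq rootA rootB
    field_simp
    nlinarith [hD2]
  have hB : 0 ≤ Bq n R r := by
    rw [hfactB]
    have hq := Real.sqrt_nonneg (((n:ℝ)-1)^2 * (1-R^2) + 4)
    have hAB : rootA n R ≤ rootB n R := by
      unfold rootA rootB
      rw [div_le_div_iff₀ hC hC]
      nlinarith
    rcases hmem with ⟨_, hle⟩ | ⟨hge, _⟩
    · have h1 : r - rootA n R ≤ 0 := by linarith
      have h2 : r - rootB n R ≤ 0 := by linarith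
      have hprod : 0 ≤ (r - rootA n R) * (r - rootB n R) := by
        nlinarith [mul_nonneg (neg_nonneg.2 h1) (neg_nonneg.2 h2)]
      rw [mul_assoc]
      exact mul_nonneg hC.le hprod
    · have h1 : 0 ≤ r - rootA n R := by linarith
      have h2 : 0 ≤ r - rootB n R := by linarith
      rw [mul_assoc]
      exact mul_nonneg hC.le (mul_nonneg h1 h2)
  have hq2 : Real.sqrt (Bq n R r) ^ 2 = Bq n R r := Real.sq_sqrt hB
  have hfactA : ∀ p : ℝ, Aq n R p r =
      Real.sqrt (1 - r ^ 2) * (p - eta1 n R r) * (p - eta2 n R r) := by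
    intro p
    unfold Aq eta1 eta2
    field_simp
    unfold Bq at hq2 ⊢
    linear_combination hq2 + 4 * hs2
  have hderiv : deriv ψ r = Phi n k R r (ψ r) := (hode r ⟨hrx, hry⟩).deriv
  have hPhi : Phi n k R r (ψ r) = -(1 / ((k : ℝ) * (1 - r ^ 2))) * ((ψ r) ^ 2 + 1) *
      Aq n R (ψ r) r := rfl
  have hc : 0 < 1 / ((k : ℝ) * (1 - r ^ 2)) := by
    have : (1:ℝ) ≤ (k:ℝ) := by exact_mod_cast hk
    positivity
  have hp1 : 0 < (ψ r) ^ 2 + 1 := by positivity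
  rw [hderiv, hPhi, hfactA (ψ r)]
  set c := 1 / ((k : ℝ) * (1 - r ^ 2)) with hc_def
  have he : eta1 n R r ≤ eta2 n R r := by
    unfold eta1 eta2
    rw [div_le_div_iff₀ (by positivity) (by positivity)]
    exact mul_le_mul_of_nonneg_right
      (by linarith [Real.sqrt_nonneg (Bq n R r)]) (by positivity)
  have keypos : ∀ A : ℝ, A < 0 → 0 < -c * ((ψ r) ^ 2 + 1) * A := by
    intro A hA
    have h := mul_pos (mul_pos hc hp1) (neg_pos.2 hA)
    have e : c * ((ψ r) ^ 2 + 1) * (-A) = -c * ((ψ r) ^ 2 + 1) * A := by ring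
    rwa [e] at h
  have keyneg : ∀ A : ℝ, 0 < A → -c * ((ψ r) ^ 2 + 1) * A < 0 := by
    intro A hA
    have h := mul_pos (mul_pos hc hp1) hA
    have e : -c * ((ψ r) ^ 2 + 1) * A = -(c * ((ψ r) ^ 2 + 1) * A) := by ring
    rw [e]
    exact neg_neg_of_pos h |>.trans_le le_rfl
  refine ⟨?_, ?_, ?_⟩
  · rintro ⟨h1, h2⟩
    exact keypos _ (mul_neg_of_pos_of_neg (mul_pos hs (sub_pos.mpr h1)) (sub_neg.mpr h2))
  · rintro (h | h) <;> rw [h] <;> simp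
  · rintro (h | h)
    · exact keyneg _ (mul_pos_of_neg_of_neg
        (mul_neg_of_pos_of_neg hs (sub_neg.mpr h)) (sub_neg.mpr (lt_of_lt_of_le h he)))
    · exact keyneg _ (mul_pos (mul_pos hs (sub_pos.mpr (lt_of_le_of_lt he h))) (sub_pos.mpr h))
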